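/- arXiv:1412.0196 — 2 statements merged into one kernel-verified Lean document; each statement's English description precedes it below -/
import Mathlib

section
/- Let d ≥ 5 and t an integer with gcd(1+t, d) = gcd(2+t, d) = gcd(1+t, 2+t) = 1 and 3+2t ≢ 0 (mod d). Let T_l = Conv(((1+t)/d, 1/d), ((1+t)/d, 0), (t/d, 1/d)) and T_r = Conv(((2+t)/d, 1/d), ((2+t)/d, 0), ((1+t)/d, 1/d)). Then the counterclockwise edge-weight multisets W_d(T_l) = {1+t, 1, −1−t} and W_d(T_r) = {2+t, 1, −2−t} (mod d) are distinct; consequently T_l and T_r are not G-equivalent. -/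
noncomputable section

/-- The lattice `(1/d)ℤ × (1/d)ℤ` inside `ℝ × ℝ`. -/
def Ld (d : ℕ) : Set (ℝ × ℝ) :=
  {p | ∃ a b : ℤ, p = ((a : ℝ) / d, (b : ℝ) / d)}

/-- A `d`-minimal triangle: vertices in `L_d`, not collinear, and the closed triangle
meets `L_d` exactly in its three vertices. -/
def IsMinimalTriangle (d : ℕ) (p q r : ℝ × ℝ) : Prop :=
  p ∈ Ld d ∧ q ∈ Ld d ∧ r ∈ Ld d ∧
    ¬ Collinear ℝ ({p, q, r} : Set (ℝ × ℝ)) ∧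
    convexHull ℝ ({p, q, r} : Set (ℝ × ℝ)) ∩ Ld d = {p, q, r}

/-- An element of `G = GL₂(ℤ) ⋉ ℤ²`: an integer matrix `[[a,b],[c,e]]` of determinant
`±1` together with an integer translation vector `(v1, v2)`. -/
structure GMap where
  a : ℤ
  b : ℤ
  c : ℤ
  e : ℤ
  v1 : ℤ
  v2 : ℤ
  unimod : a * e - b * c = 1 ∨ a * e - b * c = -1

/-- The affine action `x ↦ Ux + v` of a `GMap` on `ℝ²`. -/
def GMap.app (g : GMap) (p : ℝ × ℝ) : ℝ × ℝ :=
  ((g.a : ℝ) * p.1 + (g.b : ℝ) * p.2 + (g.v1 : ℝ),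
   (g.c : ℝ) * p.1 + (g.e : ℝ) * p.2 + (g.v2 : ℝ))

/-- A `d`-minimal segment: endpoints in `L_d`, distinct, and the closed segment meets
`L_d` exactly in its two endpoints. -/
def IsMinimalSegment (d : ℕ) (p q : ℝ × ℝ) : Prop :=
  p ∈ Ld d ∧ q ∈ Ld d ∧ p ≠ q ∧ segment ℝ p q ∩ Ld d = {p, q}

/-- The point of `L_d` with integer numerator data `p : ℤ × ℤ`. -/
def pt (d : ℕ) (p : ℤ × ℤ) : ℝ × ℝ := ((p.1 : ℝ) / d, (p.2 : ℝ) / d)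

/-- Counterclockwise orientation of the ordered triple of numerator data. -/
def ccwZ (p q r : ℤ × ℤ) : Prop :=
  0 < (q.1 - p.1) * (r.2 - p.2) - (q.2 - p.2) * (r.1 - p.1)

/-- Weight (mod `d`) of the oriented minimal segment from `(w/d, x/d)` to `(y/d, z/d)`,
given by numerator data `(w,x)` and `(y,z)`. -/
def segWeight (d : ℕ) (p q : ℤ × ℤ) : ZMod d :=
  ((p.1 * q.2 - p.2 * q.1 : ℤ) : ZMod d)

/-- The multiset of weights of the three edges `p→q`, `q→r`, `r→p` of a triangle
given by numerator data. -/
def triWeight (d : ℕ) (p q r : ℤ × ℤ) : Multiset (ZMod d) :=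
  {segWeight d p q, segWeight d q r, segWeight d r p}

/-! ### Auxiliary lemmas -/

/-- A point not in the hull of `s` is an extreme point of the hull of `insert x s`. -/
lemma extreme_of_not_mem_hull {x : ℝ × ℝ} {s : Set (ℝ × ℝ)} (hs : s.Nonempty)
    (hx : x ∉ convexHull ℝ s) :
    x ∈ (convexHull ℝ (insert x s)).extremePoints ℝ := by
  rw [mem_extremePoints]
  refine ⟨subset_convexHull ℝ _ (Set.mem_insert _ _), ?_⟩
  intro y hy z hz hseg
  rw [convexHull_insert hs, mem_convexJoin] at hy hz
  obtain ⟨x', hx', y', hy's, hyseg⟩ := hy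
  obtain ⟨x'', hx'', z', hz's, hzseg⟩ := hz
  rw [Set.mem_singleton_iff] at hx' hx''
  obtain ⟨c₁, c₂, hc₁, hc₂, hcsum, hyeq⟩ := hyseg
  obtain ⟨e₁, e₂, he₁, he₂, hesum, hzeq⟩ := hzseg
  rw [hx'] at hyeq
  rw [hx''] at hzeq
  obtain ⟨p, q, hp, hq, hpq, hxeq⟩ := hseg
  by_cases hβ : p * c₂ + q * e₂ = 0
  · have hc2 : c₂ = 0 := by nlinarith
    have he2 : e₂ = 0 := by nlinarith
    constructor
    · rw [← hyeq, hc2]; have : c₁ = 1 := by linarith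
      rw [this]; simp
    · rw [← hzeq, he2]; have : e₁ = 1 := by linarith
      rw [this]; simp
  · exfalso
    have hβpos : 0 < p * c₂ + q * e₂ := by
      rcases lt_or_eq_of_le (by positivity : (0:ℝ) ≤ p * c₂ + q * e₂) with h | h
      · exact h
      · exact absurd h.symm hβ
    set β := p * c₂ + q * e₂ with hβdef
    apply hx
    have hmem := (convex_convexHull ℝ s) hy's hz's
      (by positivity : (0:ℝ) ≤ p * c₂ / β) (by positivity : (0:ℝ) ≤ q * e₂ / β)
      (by field_simp; exact hβdef.symm)
    have hxval : x = (p * c₂ / β) • y' + (q * e₂ / β) • z' := by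
      have h1 : x.1 = p * y.1 + q * z.1 := by
        rw [← hxeq]; simp [Prod.fst_add, Prod.smul_fst, smul_eq_mul]
      have h2 : x.2 = p * y.2 + q * z.2 := by
        rw [← hxeq]; simp [Prod.snd_add, Prod.smul_snd, smul_eq_mul]
      have hy1 : y.1 = c₁ * x.1 + c₂ * y'.1 := by
        rw [← hyeq]; simp [smul_eq_mul]
      have hy2 : y.2 = c₁ * x.2 + c₂ * y'.2 := by
        rw [← hyeq]; simp [smul_eq_mul]
      have hz1 : z.1 = e₁ * x.1 + e₂ * z'.1 := by
        rw [← hzeq]; simp [smul_eq_mul]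
      have hz2 : z.2 = e₁ * x.2 + e₂ * z'.2 := by
        rw [← hzeq]; simp [smul_eq_mul]
      have hβ1 : β = 1 - (p * c₁ + q * e₁) := by
        rw [hβdef]; nlinarith [hcsum, hesum, hpq]
      apply Prod.ext
      · simp only [Prod.fst_add, Prod.smul_fst, smul_eq_mul]
        field_simp
        linear_combination h1 + p * hy1 + q * hz1 + x.1 * hβ1
      · simp only [Prod.snd_add, Prod.smul_snd, smul_eq_mul]
        field_simp
        linear_combination h2 + p * hy2 + q * hz2 + x.2 * hβ1
    rw [hxval]; exact hmem

lemma not_collinear_of_cross {p q r : ℝ × ℝ}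
    (h : (q.1 - p.1) * (r.2 - p.2) - (q.2 - p.2) * (r.1 - p.1) ≠ 0) :
    ¬ Collinear ℝ ({p, q, r} : Set (ℝ × ℝ)) := by
  intro hc
  rw [collinear_iff_of_mem (Set.mem_insert p _)] at hc
  obtain ⟨v, hv⟩ := hc
  obtain ⟨aq, hq⟩ := hv q (by simp)
  obtain ⟨ar, hr⟩ := hv r (by simp)
  apply h
  rw [hq, hr]
  simp only [Prod.fst_add, Prod.snd_add, Prod.smul_fst, Prod.smul_snd, smul_eq_mul,
    Prod.fst_vadd, Prod.snd_vadd, vadd_eq_add]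
  ring

lemma not_mem_hull_pair {a b c : ℝ × ℝ} (h : ¬ Collinear ℝ ({a, b, c} : Set (ℝ × ℝ))) :
    a ∉ convexHull ℝ ({b, c} : Set (ℝ × ℝ)) := by
  intro ha
  exact h (collinear_insert_of_mem_affineSpan_pair (convexHull_subset_affineSpan _ ha))

lemma vertex_extreme {a b c : ℝ × ℝ} (h : ¬ Collinear ℝ ({a, b, c} : Set (ℝ × ℝ))) :
    a ∈ (convexHull ℝ ({a, b, c} : Set (ℝ × ℝ))).extremePoints ℝ :=
  extreme_of_not_mem_hull (Set.insert_nonempty _ _) (not_mem_hull_pair h)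

lemma tri_eq {x1 x2 x3 y1 y2 y3 : ℝ × ℝ}
    (hx : ¬ Collinear ℝ ({x1, x2, x3} : Set (ℝ × ℝ)))
    (hy : ¬ Collinear ℝ ({y1, y2, y3} : Set (ℝ × ℝ)))
    (h : convexHull ℝ ({x1, x2, x3} : Set (ℝ × ℝ)) = convexHull ℝ ({y1, y2, y3} : Set (ℝ × ℝ))) :
    ({x1, x2, x3} : Set (ℝ × ℝ)) = {y1, y2, y3} := by
  have h213 : ({x1, x2, x3} : Set (ℝ × ℝ)) = {x2, x1, x3} := Set.insert_comm _ _ _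
  have h312 : ({x1, x2, x3} : Set (ℝ × ℝ)) = {x3, x1, x2} := by
    ext w; simp; tauto
  have h213' : ({y1, y2, y3} : Set (ℝ × ℝ)) = {y2, y1, y3} := Set.insert_comm _ _ _
  have h312' : ({y1, y2, y3} : Set (ℝ × ℝ)) = {y3, y1, y2} := by
    ext w; simp; tauto
  have key : ∀ w : ℝ × ℝ, w ∈ (convexHull ℝ ({x1, x2, x3} : Set (ℝ × ℝ))).extremePoints ℝ →
      w ∈ ({y1, y2, y3} : Set (ℝ × ℝ)) := by
    intro w hw
    rw [h] at hw
    exact extremePoints_convexHull_subset hw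
  have key' : ∀ w : ℝ × ℝ, w ∈ (convexHull ℝ ({y1, y2, y3} : Set (ℝ × ℝ))).extremePoints ℝ →
      w ∈ ({x1, x2, x3} : Set (ℝ × ℝ)) := by
    intro w hw
    rw [← h] at hw
    exact extremePoints_convexHull_subset hw
  apply Set.Subset.antisymm
  · intro w hw
    rcases hw with rfl | rfl | rfl
    · exact key _ (vertex_extreme hx)
    · exact key _ (by rw [h213]; exact vertex_extreme (h213 ▸ hx))
    · exact key _ (by rw [h312]; exact vertex_extreme (h312 ▸ hx))
  · intro w hw
    rcases hw with rfl | rfl | rfl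
    · exact key' _ (vertex_extreme hy)
    · exact key' _ (by rw [h213']; exact vertex_extreme (h213' ▸ hy))
    · exact key' _ (by rw [h312']; exact vertex_extreme (h312' ▸ hy))

lemma GMap.det_cast_ne (g : GMap) : ((g.a : ℝ) * g.e - g.b * g.c) ≠ 0 := by
  have : ((g.a * g.e - g.b * g.c : ℤ) : ℝ) ≠ 0 := by
    rcases g.unimod with hu | hu <;> rw [hu] <;> norm_num
  push_cast at this
  exact this

lemma GMap.app_injective (g : GMap) : Function.Injective g.app := by
  intro x y h
  rw [GMap.app, GMap.app, Prod.mk.injEq] at h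
  obtain ⟨h1, h2⟩ := h
  have k1 : ((g.a : ℝ) * g.e - g.b * g.c) * (x.1 - y.1) = 0 := by
    linear_combination (g.e : ℝ) * h1 - (g.b : ℝ) * h2
  have k2 : ((g.a : ℝ) * g.e - g.b * g.c) * (x.2 - y.2) = 0 := by
    linear_combination (g.a : ℝ) * h2 - (g.c : ℝ) * h1
  have e1 := (mul_eq_zero.1 k1).resolve_left g.det_cast_ne
  have e2 := (mul_eq_zero.1 k2).resolve_left g.det_cast_ne
  exact Prod.ext (by linarith) (by linarith)

/-- `GMap.app` as an affine map. -/
def GMap.toAffine (g : GMap) : ℝ × ℝ →ᵃ[ℝ] ℝ × ℝ where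
  toFun := g.app
  linear :=
    { toFun := fun p => ((g.a : ℝ) * p.1 + (g.b : ℝ) * p.2, (g.c : ℝ) * p.1 + (g.e : ℝ) * p.2)
      map_add' := by intro p q; simp [Prod.ext_iff]; constructor <;> ring
      map_smul' := by intro m p; simp [Prod.ext_iff, smul_eq_mul]; constructor <;> ring }
  map_vadd' := by
    intro p v
    simp [GMap.app, Prod.ext_iff, vadd_eq_add]
    constructor <;> ring

lemma GMap.image_hull (g : GMap) (s : Set (ℝ × ℝ)) :
    g.app '' convexHull ℝ s = convexHull ℝ (g.app '' s) :=
  AffineMap.image_convexHull g.toAffine s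

lemma int_eqs (g : GMap) {d : ℕ} (hd : (d : ℝ) ≠ 0) (p1 p2 q1 q2 : ℤ)
    (h : g.app (pt d (p1, p2)) = pt d (q1, q2)) :
    g.a * p1 + g.b * p2 + g.v1 * d = q1 ∧ g.c * p1 + g.e * p2 + g.v2 * d = q2 := by
  rw [GMap.app, pt, pt, Prod.mk.injEq] at h
  obtain ⟨h1, h2⟩ := h
  simp only at h1 h2
  field_simp at h1 h2
  constructor
  · exact_mod_cast (by push_cast; linarith : ((g.a * p1 + g.b * p2 + g.v1 * d : ℤ) : ℝ) = (q1 : ℤ))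
  · exact_mod_cast (by push_cast; linarith : ((g.c * p1 + g.e * p2 + g.v2 * d : ℤ) : ℝ) = (q2 : ℤ))

lemma pt_inj {d : ℕ} (hd : (d : ℝ) ≠ 0) : Function.Injective (pt d) := by
  intro p q h
  rw [pt, pt, Prod.mk.injEq] at h
  obtain ⟨h1, h2⟩ := h
  field_simp at h1 h2
  exact Prod.ext (by exact_mod_cast h1) (by exact_mod_cast h2)

/-- for similar neighbors `T_l` and `T_r` (with the stated coprimality
conditions and `3 + 2t ≢ 0 mod d`), the counterclockwise edge-weight multisets are
`{1+t, 1, −1−t}` and `{2+t, 1, −2−t}` respectively, these multisets are distinct,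
and consequently `T_l` and `T_r` are not `G`-equivalent. -/
theorem similar_neighbors_not_G_equiv (d : ℕ) (hd : 5 ≤ d) (t : ℤ)
    (h1 : Int.gcd (1 + t) (d : ℤ) = 1)
    (h2 : Int.gcd (2 + t) (d : ℤ) = 1)
    (h12 : Int.gcd (1 + t) (2 + t) = 1)
    (h3 : ((3 + 2 * t : ℤ) : ZMod d) ≠ 0) :
    triWeight d (1 + t, 0) (1 + t, 1) (t, 1)
        = ({((1 + t : ℤ) : ZMod d), 1, ((-(1 + t) : ℤ) : ZMod d)} : Multiset (ZMod d)) ∧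
    triWeight d (2 + t, 0) (2 + t, 1) (1 + t, 1)
        = ({((2 + t : ℤ) : ZMod d), 1, ((-(2 + t) : ℤ) : ZMod d)} : Multiset (ZMod d)) ∧
    triWeight d (1 + t, 0) (1 + t, 1) (t, 1)
        ≠ triWeight d (2 + t, 0) (2 + t, 1) (1 + t, 1) ∧
    ¬ ∃ g : GMap,
        g.app '' convexHull ℝ
            ({pt d (1 + t, 1), pt d (1 + t, 0), pt d (t, 1)} : Set (ℝ × ℝ))
          = convexHull ℝ
            ({pt d (2 + t, 1), pt d (2 + t, 0), pt d (1 + t, 1)} : Set (ℝ × ℝ)) := by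
  refine ⟨?_, ?_, ?_, ?_⟩
  · simp only [triWeight, segWeight]
    congr 1
    · push_cast; ring
    congr 1
    · push_cast; ring
    congr 1
    · push_cast; ring
  · simp only [triWeight, segWeight]
    congr 1
    · push_cast; ring
    congr 1
    · push_cast; ring
    congr 1
    · push_cast; ring
  · intro h
    apply h3
    have hp := congrArg Multiset.prod h
    simp only [triWeight, segWeight, Multiset.insert_eq_cons, Multiset.prod_cons,
      Multiset.prod_singleton] at hp
    push_cast at hp ⊢
    linear_combination hp
  · rintro ⟨g, hEq⟩
    have hdR : (d : ℝ) ≠ 0 := Nat.cast_ne_zero.mpr (by omega)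
    have hnd0 : ¬ (d : ℤ) ∣ 1 := by
      intro hdvd; have := Int.le_of_dvd one_pos hdvd; omega
    have hnd1 : ¬ (d : ℤ) ∣ (1 + t) := by
      intro hdvd
      have h := Int.dvd_coe_gcd hdvd (dvd_refl (d : ℤ))
      rw [h1] at h
      have := Int.le_of_dvd one_pos (by exact_mod_cast h : (d : ℤ) ∣ 1)
      push_cast at this; omega
    have hnd2 : ¬ (d : ℤ) ∣ (2 + t) := by
      intro hdvd
      have h := Int.dvd_coe_gcd hdvd (dvd_refl (d : ℤ))
      rw [h2] at h
      have := Int.le_of_dvd one_pos (by exact_mod_cast h : (d : ℤ) ∣ 1)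
      push_cast at this; omega
    have hnd3 : ¬ (d : ℤ) ∣ (3 + 2 * t) := fun hdvd =>
      h3 ((ZMod.intCast_zmod_eq_zero_iff_dvd _ _).mpr hdvd)
    rw [GMap.image_hull, Set.image_insert_eq, Set.image_insert_eq, Set.image_singleton] at hEq
    -- the target triangle is nondegenerate
    have hQ : ¬ Collinear ℝ
        ({pt d (2 + t, 1), pt d (2 + t, 0), pt d (1 + t, 1)} : Set (ℝ × ℝ)) := by
      apply not_collinear_of_cross
      have : ((pt d (2 + t, 0)).1 - (pt d (2 + t, 1)).1) *
            ((pt d (1 + t, 1)).2 - (pt d (2 + t, 1)).2) -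
          ((pt d (2 + t, 0)).2 - (pt d (2 + t, 1)).2) *
            ((pt d (1 + t, 1)).1 - (pt d (2 + t, 1)).1) = -(1 / (d : ℝ) ^ 2) := by
        simp only [pt]
        push_cast
        field_simp
        ring
      rw [this]
      intro hc
      rw [neg_eq_zero, div_eq_zero_iff] at hc
      rcases hc with hc | hc
      · norm_num at hc
      · exact hdR (by nlinarith [hc])
    -- the image triangle is nondegenerate
    have hP : ¬ Collinear ℝ
        ({g.app (pt d (1 + t, 1)), g.app (pt d (1 + t, 0)), g.app (pt d (t, 1))} :
          Set (ℝ × ℝ)) := by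
      apply not_collinear_of_cross
      have : ((g.app (pt d (1 + t, 0))).1 - (g.app (pt d (1 + t, 1))).1) *
            ((g.app (pt d (t, 1))).2 - (g.app (pt d (1 + t, 1))).2) -
          ((g.app (pt d (1 + t, 0))).2 - (g.app (pt d (1 + t, 1))).2) *
            ((g.app (pt d (t, 1))).1 - (g.app (pt d (1 + t, 1))).1) =
          ((g.b : ℝ) * g.c - (g.a : ℝ) * g.e) / (d : ℝ) ^ 2 := by
        simp only [GMap.app, pt]
        push_cast
        field_simp
        ring
      rw [this]
      intro hc
      rw [div_eq_zero_iff] at hc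
      rcases hc with hc | hc
      · exact g.det_cast_ne (by linarith)
      · exact hdR (by nlinarith [hc])
    have hSets := tri_eq hP hQ hEq
    have m1 : g.app (pt d (1 + t, 1)) ∈
        ({pt d (2 + t, 1), pt d (2 + t, 0), pt d (1 + t, 1)} : Set (ℝ × ℝ)) := by
      rw [← hSets]; exact Set.mem_insert _ _
    have m2 : g.app (pt d (1 + t, 0)) ∈
        ({pt d (2 + t, 1), pt d (2 + t, 0), pt d (1 + t, 1)} : Set (ℝ × ℝ)) := by
      rw [← hSets]; exact Set.mem_insert_of_mem _ (Set.mem_insert _ _)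
    have m3 : g.app (pt d (t, 1)) ∈
        ({pt d (2 + t, 1), pt d (2 + t, 0), pt d (1 + t, 1)} : Set (ℝ × ℝ)) := by
      rw [← hSets]
      exact Set.mem_insert_of_mem _ (Set.mem_insert_of_mem _ (Set.mem_singleton _))
    simp only [Set.mem_insert_iff, Set.mem_singleton_iff] at m1 m2 m3
    have hne12 : g.app (pt d (1 + t, 1)) ≠ g.app (pt d (1 + t, 0)) := by
      intro h
      have := pt_inj hdR (g.app_injective h)
      rw [Prod.mk.injEq] at this
      omega
    have hne13 : g.app (pt d (1 + t, 1)) ≠ g.app (pt d (t, 1)) := by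
      intro h
      have := pt_inj hdR (g.app_injective h)
      rw [Prod.mk.injEq] at this
      omega
    have hne23 : g.app (pt d (1 + t, 0)) ≠ g.app (pt d (t, 1)) := by
      intro h
      have := pt_inj hdR (g.app_injective h)
      rw [Prod.mk.injEq] at this
      omega
    rcases m1 with hA | hA | hA <;> rcases m2 with hB | hB | hB <;>
        rcases m3 with hC | hC | hC <;>
      first
        | exact hne12 (hA.trans hB.symm)
        | exact hne13 (hA.trans hC.symm)
        | exact hne23 (hB.trans hC.symm)
        | (obtain ⟨eA, -⟩ := int_eqs g hdR _ _ _ _ hA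
           obtain ⟨eB, -⟩ := int_eqs g hdR _ _ _ _ hB
           obtain ⟨eC, -⟩ := int_eqs g hdR _ _ _ _ hC
           first
             | exact hnd0 ⟨g.v1, by linear_combination (1 + t) * eA - eB - (1 + t) * eC⟩
             | exact hnd1 ⟨g.v1, by linear_combination (1 + t) * eA - eB - (1 + t) * eC⟩
             | exact hnd2 ⟨g.v1, by linear_combination (1 + t) * eA - eB - (1 + t) * eC⟩
             | exact hnd3 ⟨g.v1, by linear_combination (1 + t) * eA - eB - (1 + t) * eC⟩)
end
end

section
/- Let e₁ be the half-open triangle T_{(1,2)} = Conv((1/5,0),(0,1/5),(1/5,1/5)) with the closed edge from (1/5,0) to (0,1/5) removed, and similarly let e₃ be removed from T_{(1,4)} = Conv((2/5,0),(1/5,1/5),(2/5,1/5)) (the closed edge from (2/5,0) to (1/5,1/5)). Then there exists a bijection F from T_{(1,2)} \ e₁ to T_{(1,4)} \ e₃ and a countable partition of T_{(1,2)} \ e₁ into pieces P₁, P₂, ... such that F restricted to P_i is the map x ↦ U_i x where U_i = [[1, i],[0, 1]] ∈ GL₂(Z). -/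
noncomputable section

/-- `T_{(1,2)} = Conv((1/5,0), (0,1/5), (1/5,1/5))`. -/
def T12 : Set (ℝ × ℝ) :=
  convexHull ℝ ({((1 : ℝ) / 5, (0 : ℝ)), (0, (1 : ℝ) / 5), ((1 : ℝ) / 5, (1 : ℝ) / 5)} :
    Set (ℝ × ℝ))

/-- `T_{(1,4)} = Conv((2/5,0), (1/5,1/5), (2/5,1/5))`. -/
def T14 : Set (ℝ × ℝ) :=
  convexHull ℝ ({((2 : ℝ) / 5, (0 : ℝ)), ((1 : ℝ) / 5, (1 : ℝ) / 5), ((2 : ℝ) / 5, (1 : ℝ) / 5)} :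
    Set (ℝ × ℝ))

/-- The closed edge `e₁` of `T_{(1,2)}` from `(1/5,0)` to `(0,1/5)`. -/
def e1 : Set (ℝ × ℝ) := segment ℝ (((1 : ℝ) / 5, (0 : ℝ))) ((0, (1 : ℝ) / 5))

/-- The closed edge `e₃` of `T_{(1,4)}` from `(2/5,0)` to `(1/5,1/5)`. -/
def e3 : Set (ℝ × ℝ) := segment ℝ (((2 : ℝ) / 5, (0 : ℝ))) (((1 : ℝ) / 5, (1 : ℝ) / 5))

lemma T12_eq : T12 = {p : ℝ × ℝ | p.1 ≤ 1/5 ∧ p.2 ≤ 1/5 ∧ 1/5 ≤ p.1 + p.2} := by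
  rw [T12, convexHull_insert (by simp), convexHull_pair]
  ext ⟨x, y⟩
  simp only [mem_convexJoin, Set.mem_singleton_iff, Set.mem_setOf_eq]
  constructor
  · rintro ⟨a, rfl, z, hz, hp⟩
    obtain ⟨s, t, hs, ht, hst, rfl⟩ := hz
    obtain ⟨u, v, hu, hv, huv, hp⟩ := hp
    have h1 : u * (1/5) + v * (s * 0 + t * (1/5)) = x := by
      simpa [Prod.smul_def, smul_eq_mul] using congrArg Prod.fst hp
    have h2 : u * 0 + v * (s * (1/5) + t * (1/5)) = y := by
      simpa [Prod.smul_def, smul_eq_mul] using congrArg Prod.snd hp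
    refine ⟨by nlinarith, by nlinarith, by nlinarith⟩
  · rintro ⟨h1, h2, h3⟩
    refine ⟨_, rfl, ?_⟩
    by_cases hy : y = 0
    · refine ⟨(0, 1/5), ⟨1, 0, by norm_num⟩, 1, 0, by norm_num, by norm_num, ?_⟩
      have : x = 1/5 := by subst hy; simp at h3; linarith
      simp [this, hy, Prod.ext_iff]
    · have hy' : 0 < y := lt_of_le_of_ne (by linarith) (Ne.symm hy)
      refine ⟨((5*x+5*y-1)/(25*y), 1/5), ⟨(1-5*x)/(5*y), (5*x+5*y-1)/(5*y),
        div_nonneg (by linarith) (by linarith), div_nonneg (by linarith) (by linarith), ?_, ?_⟩,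
        1 - 5*y, 5*y, by linarith, by linarith, by ring, ?_⟩
      · rw [← add_div, div_eq_one_iff_eq (by positivity)]; ring
      · ext
        · show (1-5*x)/(5*y) * 0 + (5*x+5*y-1)/(5*y) * (1/5) = (5*x+5*y-1)/(25*y)
          field_simp
          ring
        · show (1-5*x)/(5*y) * (1/5) + (5*x+5*y-1)/(5*y) * (1/5) = 1/5
          rw [div_mul_eq_mul_div, div_mul_eq_mul_div, ← add_div,
            div_eq_div_iff (by positivity) (by norm_num)]
          ring
      · ext
        · show (1-5*y) * (1/5) + 5*y * ((5*x+5*y-1)/(25*y)) = x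
          field_simp; ring
        · show (1-5*y) * 0 + 5*y * (1/5) = y
          ring

lemma T14_eq : T14 = {p : ℝ × ℝ | p.1 ≤ 2/5 ∧ p.2 ≤ 1/5 ∧ 2/5 ≤ p.1 + p.2} := by
  rw [T14, convexHull_insert (by simp), convexHull_pair]
  ext ⟨x, y⟩
  simp only [mem_convexJoin, Set.mem_singleton_iff, Set.mem_setOf_eq]
  constructor
  · rintro ⟨a, rfl, z, hz, hp⟩
    obtain ⟨s, t, hs, ht, hst, rfl⟩ := hz
    obtain ⟨u, v, hu, hv, huv, hp⟩ := hp
    have h1 : u * (2/5) + v * (s * (1/5) + t * (2/5)) = x := by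
      simpa [Prod.smul_def, smul_eq_mul] using congrArg Prod.fst hp
    have h2 : u * 0 + v * (s * (1/5) + t * (1/5)) = y := by
      simpa [Prod.smul_def, smul_eq_mul] using congrArg Prod.snd hp
    refine ⟨by nlinarith, by nlinarith, by nlinarith⟩
  · rintro ⟨h1, h2, h3⟩
    refine ⟨_, rfl, ?_⟩
    by_cases hy : y = 0
    · refine ⟨(1/5, 1/5), ⟨1, 0, by norm_num⟩, 1, 0, by norm_num, by norm_num, ?_⟩
      have : x = 2/5 := by subst hy; simp at h3; linarith
      simp [this, hy, Prod.ext_iff]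
    · have hy' : 0 < y := lt_of_le_of_ne (by linarith) (Ne.symm hy)
      refine ⟨((5*x+10*y-2)/(25*y), 1/5), ⟨(2-5*x)/(5*y), (5*x+5*y-2)/(5*y),
        div_nonneg (by linarith) (by linarith), div_nonneg (by linarith) (by linarith), ?_, ?_⟩,
        1 - 5*y, 5*y, by linarith, by linarith, by ring, ?_⟩
      · rw [← add_div, div_eq_one_iff_eq (by positivity)]; ring
      · ext
        · show (2-5*x)/(5*y) * (1/5) + (5*x+5*y-2)/(5*y) * (2/5) = (5*x+10*y-2)/(25*y)
          rw [div_mul_eq_mul_div, div_mul_eq_mul_div, ← add_div,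
            div_eq_div_iff (by positivity) (by positivity)]
          ring
        · show (2-5*x)/(5*y) * (1/5) + (5*x+5*y-2)/(5*y) * (1/5) = 1/5
          rw [div_mul_eq_mul_div, div_mul_eq_mul_div, ← add_div,
            div_eq_div_iff (by positivity) (by norm_num)]
          ring
      · ext
        · show (1-5*y) * (2/5) + 5*y * ((5*x+10*y-2)/(25*y)) = x
          field_simp; ring
        · show (1-5*y) * 0 + 5*y * (1/5) = y
          ring

lemma mem_e1_sum {p : ℝ × ℝ} (h : p ∈ e1) : p.1 + p.2 = 1/5 := by
  obtain ⟨a, b, ha, hb, hab, hp⟩ := h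
  have h1 := congrArg Prod.fst hp
  have h2 := congrArg Prod.snd hp
  simp [Prod.smul_def, smul_eq_mul] at h1 h2
  rw [← h1, ← h2]; linarith

lemma mem_e3_sum {p : ℝ × ℝ} (h : p ∈ e3) : p.1 + p.2 = 2/5 := by
  obtain ⟨a, b, ha, hb, hab, hp⟩ := h
  have h1 := congrArg Prod.fst hp
  have h2 := congrArg Prod.snd hp
  simp [Prod.smul_def, smul_eq_mul] at h1 h2
  rw [← h1, ← h2]; linarith

lemma mem_T12_diff {p : ℝ × ℝ} :
    p ∈ T12 \ e1 ↔ p.1 ≤ 1/5 ∧ p.2 ≤ 1/5 ∧ 1/5 < p.1 + p.2 := by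
  rw [Set.mem_diff, T12_eq]
  constructor
  · rintro ⟨⟨h1, h2, h3⟩, he⟩
    refine ⟨h1, h2, lt_of_le_of_ne h3 fun h => he ?_⟩
    exact ⟨5*p.1, 5*p.2, by linarith, by linarith, by linarith,
      by ext <;> simp [Prod.smul_def, smul_eq_mul] <;> linarith⟩
  · rintro ⟨h1, h2, h3⟩
    exact ⟨⟨h1, h2, le_of_lt h3⟩, fun he => absurd (mem_e1_sum he) (by linarith)⟩

lemma mem_T14_diff {p : ℝ × ℝ} :
    p ∈ T14 \ e3 ↔ p.1 ≤ 2/5 ∧ p.2 ≤ 1/5 ∧ 2/5 < p.1 + p.2 := by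
  rw [Set.mem_diff, T14_eq]
  constructor
  · rintro ⟨⟨h1, h2, h3⟩, he⟩
    refine ⟨h1, h2, lt_of_le_of_ne h3 fun h => he ?_⟩
    exact ⟨1 - 5*p.2, 5*p.2, by linarith, by linarith, by linarith,
      by ext <;> simp [Prod.smul_def, smul_eq_mul] <;> linarith⟩
  · rintro ⟨h1, h2, h3⟩
    exact ⟨⟨h1, h2, le_of_lt h3⟩, fun he => absurd (mem_e3_sum he) (by linarith)⟩

lemma floor_char {x y : ℝ} (hy : 0 < y) (n : ℤ) :
    ⌊(2/5 - x)/y⌋ = n ↔ x + n*y ≤ 2/5 ∧ 2/5 < x + (n+1)*y := by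
  rw [Int.floor_eq_iff, le_div_iff₀ hy, div_lt_iff₀ hy]
  constructor <;> rintro ⟨ha, hb⟩ <;> constructor <;> push_cast at * <;> nlinarith

/-- there is a bijection `F` from `T_{(1,2)} \ e₁` onto `T_{(1,4)} \ e₃`
together with a countable partition of `T_{(1,2)} \ e₁` into pieces `P i`, on each of
which `F` acts as the unimodular shear `U_i = [[1, i], [0, 1]]`. -/
theorem infinite_equidecomposability :
    ∃ (F : ℝ × ℝ → ℝ × ℝ) (P : ℕ → Set (ℝ × ℝ)),
      Set.BijOn F (T12 \ e1) (T14 \ e3) ∧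
      (⋃ i, P i) = T12 \ e1 ∧
      Pairwise (Function.onFun Disjoint P) ∧
      ∀ i : ℕ, Set.EqOn F (fun x : ℝ × ℝ => (x.1 + (i : ℝ) * x.2, x.2)) (P i) := by
  set n : ℝ × ℝ → ℤ := fun p => ⌊(2/5 - p.1)/p.2⌋ with hn
  refine ⟨fun p => (p.1 + (n p : ℝ) * p.2, p.2),
    fun i => {p | p ∈ T12 \ e1 ∧ n p = (i : ℤ)}, ⟨?_, ?_, ?_⟩, ?_, ?_, ?_⟩
  · -- MapsTo
    rintro ⟨x, y⟩ hp
    obtain ⟨h1, h2, h3⟩ := mem_T12_diff.mp hp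
    have hy : 0 < y := by linarith
    have := (floor_char (x := x) hy (n (x, y))).mp rfl
    exact mem_T14_diff.mpr ⟨by simpa using this.1, h2, by
      have := this.2; push_cast at this ⊢; nlinarith⟩
  · -- InjOn
    rintro ⟨x, y⟩ hp ⟨x', y'⟩ hq heq
    obtain ⟨h1, h2, h3⟩ := mem_T12_diff.mp hp
    obtain ⟨h1', h2', h3'⟩ := mem_T12_diff.mp hq
    have hy : 0 < y := by linarith
    have hy' : y = y' := congrArg Prod.snd heq
    subst hy'
    have hx : x + (n (x, y) : ℝ) * y = x' + (n (x', y) : ℝ) * y := congrArg Prod.fst heq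
    have hF := (floor_char (x := x) hy (n (x, y))).mp rfl
    have hF' := (floor_char (x := x') hy (n (x', y))).mp rfl
    have hnn : n (x, y) = n (x', y) := by
      by_contra hne
      rcases lt_or_gt_of_ne hne with h | h
      · have : (n (x,y) : ℝ) + 1 ≤ (n (x',y) : ℝ) := by exact_mod_cast h
        nlinarith [hF.2, hF'.1]
      · have : (n (x',y) : ℝ) + 1 ≤ (n (x,y) : ℝ) := by exact_mod_cast h
        nlinarith [hF.1, hF'.2]
    have : x = x' := by rw [hnn] at hx; nlinarith [hx]
    simp [this]
  · -- SurjOn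
    rintro ⟨X, Y⟩ hq
    obtain ⟨h1, h2, h3⟩ := mem_T14_diff.mp hq
    have hY : 0 < Y := by linarith
    set m : ℤ := ⌈(X - 1/5)/Y⌉ with hm
    have hm1 : (X - 1/5)/Y ≤ (m : ℝ) := Int.le_ceil _
    have hm2 : (m : ℝ) < (X - 1/5)/Y + 1 := by
      have := Int.ceil_lt_add_one (R := ℝ) ((X - 1/5)/Y)
      linarith
    have hmle : X - 1/5 ≤ (m : ℝ) * Y := by
      rw [div_le_iff₀ hY] at hm1; linarith
    have hmgt : (m : ℝ) * Y < X - 1/5 + Y := by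
      have h := (lt_div_iff₀ hY).mp (show (m:ℝ) - 1 < (X - 1/5)/Y by linarith)
      nlinarith
    refine ⟨(X - m * Y, Y), mem_T12_diff.mpr ⟨by linarith, h2, by linarith⟩, ?_⟩
    have hfl : n (X - m * Y, Y) = m :=
      (floor_char hY m).mpr ⟨by push_cast; ring_nf; linarith, by push_cast; ring_nf; linarith⟩
    simp only [hfl]
    ext <;> simp <;> ring
  · -- Union
    ext p
    simp only [Set.mem_iUnion, Set.mem_setOf_eq]
    constructor
    · rintro ⟨i, hp, _⟩; exact hp
    · intro hp
      obtain ⟨h1, h2, h3⟩ := mem_T12_diff.mp hp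
      have hy : 0 < p.2 := by linarith
      have hpos : 0 ≤ n p := by
        rw [hn]
        apply Int.floor_nonneg.mpr
        apply div_nonneg (by linarith) (le_of_lt hy)
      exact ⟨(n p).toNat, hp, by rw [Int.toNat_of_nonneg hpos]⟩
  · -- Pairwise disjoint
    intro i j hij
    simp only [Function.onFun, Set.disjoint_left]
    rintro p ⟨_, hi⟩ ⟨_, hj⟩
    exact hij (by exact_mod_cast hi.symm.trans hj)
  · -- EqOn
    rintro i p ⟨_, hi⟩
    simp only [hi]
    ext <;> simp
end
end
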